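/- arXiv:2102.01791 — 3 statements merged into one kernel-verified Lean document; each statement's English description precedes it below -/
import Mathlib

section
/- Let γ : ℝ → ℝ³ be 1-periodic, twice continuously differentiable, arclength-parameterized (‖γ'(s)‖ = 1 for all s), and satisfy the chord-arc condition: there exists c > 0 with ‖γ(s) − γ(t)‖ ≥ c·|sin(π(s−t))| for all s, t ∈ ℝ. Let f : ℝ → ℝ³ be 1-periodic and Lipschitz continuous. Then there exists M > 0 such that for all s, t ∈ ℝ with s − t ∉ ℤ, writing r = γ(s) − γ(t) and e = γ'(s), one has ‖ f(t)/‖r‖ + (⟨r, f(t)⟩/‖r‖³)·r − (π/|sin(π(s−t))|)·( f(s) + ⟨e, f(s)⟩·e ) ‖ ≤ M. (That is, the two individually divergent terms in the Keller–Rubinow slender-body integrand cancel to give a bounded integrand.) -/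
open Real
open scoped RealInnerProductSpace

section Helpers

variable {E : Type*} [NormedAddCommGroup E] [NormedSpace ℝ E]

lemma kr_periodic_deriv (g : ℝ → E) (hg : Function.Periodic g 1) :
    Function.Periodic (deriv g) 1 := by
  intro x
  have h1 : deriv (fun y => g (y + 1)) x = deriv g (x + 1) := deriv_comp_add_const g 1 x
  have h2 : (fun y => g (y + 1)) = g := funext fun y => hg y
  rw [← h1, h2]

lemma kr_periodic_norm_bound (g : ℝ → E) (hg : Function.Periodic g 1) (hcont : Continuous g) :
    ∃ C : ℝ, ∀ x, ‖g x‖ ≤ C := by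
  obtain ⟨C, hC⟩ := (isCompact_Icc (a := (0:ℝ)) (b := 1)).exists_bound_of_continuousOn
    hcont.continuousOn
  refine ⟨C, fun x => ?_⟩
  have h1 : g (x - (⌊x⌋ : ℝ) * 1) = g x := hg.sub_int_mul_eq ⌊x⌋
  have h2 : x - (⌊x⌋ : ℝ) * 1 = Int.fract x := by rw [mul_one]; rfl
  rw [← h1, h2]
  exact hC _ ⟨Int.fract_nonneg x, (Int.fract_lt_one x).le⟩

lemma kr_sub_sin_le_cube {x : ℝ} (hx : 0 ≤ x) (hx2 : x ≤ π / 2) : x - Real.sin x ≤ x ^ 3 := by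
  rcases le_or_gt x 1 with h1 | h1
  · rcases eq_or_lt_of_le hx with h0 | h0
    · simp [← h0]
    · have h := Real.sin_gt_sub_cube h0
      nlinarith [pow_nonneg hx 3]
  · have hs1 : (3:ℝ)/4 ≤ Real.sin 1 := by
      have := Real.sin_gt_sub_cube one_pos
      norm_num at this
      linarith
    have hmono : Real.sin 1 ≤ Real.sin x := by
      apply Real.strictMonoOn_sin.monotoneOn _ _ h1.le
      · constructor
        · linarith [Real.pi_pos]
        · linarith [Real.pi_gt_three]
      · constructor
        · linarith [Real.pi_pos]
        · exact hx2
    have hpi : π < 3.15 := Real.pi_lt_d2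
    have hx3 : (1:ℝ) ≤ x^3 := one_le_pow₀ h1.le
    nlinarith

end Helpers

set_option maxHeartbeats 2000000 in
lemma kr_core {V : Type*} [NormedAddCommGroup V] [InnerProductSpace ℝ V]
    (K c L F δ a S u : ℝ) (r e ft fs : V)
    (hc : 0 < c) (hL1 : 1 ≤ L) (hF1 : 1 ≤ F) (hK0 : 0 ≤ K)
    (hδpos : 0 < δ) (hδhalf : δ ≤ 1/2) (hδu : δ = |u|)
    (hne1 : ‖e‖ = 1)
    (hfsF : ‖fs‖ ≤ F)
    (hftfs : ‖ft - fs‖ ≤ K * δ)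
    (hS2 : 2*δ ≤ S) (hSle : S ≤ π*δ) (hScube : π*δ - S ≤ π^3*δ^3)
    (ha2 : 2*c*δ ≤ a) (hale : a ≤ δ) (har : a = ‖r‖)
    (hwbd : ‖r - u • e‖ ≤ L*δ^2) :
    ‖a⁻¹ • ft + (⟪r, ft⟫ / a ^ 3) • r - (π / S) • (fs + ⟪e, fs⟫ • e)‖ ≤
      K/(2*c) + L*F/(2*c) + K/(2*c) + 3*F*L^2/(8*c^3) + 3*L*F/(8*c^3) + π^3*F := by
  have hπ := Real.pi_pos
  have hc2 : (0:ℝ) < 2*c := by linarith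
  set w := r - u • e with hw
  have hLpos : (0:ℝ) < L := lt_of_lt_of_le one_pos hL1
  have hFpos : (0:ℝ) < F := lt_of_lt_of_le one_pos hF1
  have hSpos : 0 < S := lt_of_lt_of_le (by positivity) hS2
  have hapos : 0 < a := lt_of_lt_of_le (by positivity) ha2
  have hadelta : |a - δ| ≤ L * δ^2 := by
    have h1 : |‖r‖ - ‖u • e‖| ≤ ‖r - u • e‖ := abs_norm_sub_norm_le _ _
    have h2 : ‖u • e‖ = δ := by
      rw [norm_smul, Real.norm_eq_abs, hne1, mul_one, hδu]
    rw [h2, ← har] at h1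
    exact h1.trans hwbd
  have ha0 : a ≠ 0 := ne_of_gt hapos
  have hδ0 : δ ≠ 0 := ne_of_gt hδpos
  have hS0 : S ≠ 0 := ne_of_gt hSpos
  have hainv : |a⁻¹ - δ⁻¹| ≤ L/(2*c) := by
    have h1 : a⁻¹ - δ⁻¹ = (δ - a)/(a*δ) := by field_simp
    rw [h1, abs_div, abs_of_pos (by positivity : (0:ℝ) < a*δ),
      div_le_div_iff₀ (by positivity) hc2]
    have h2 : |δ - a| ≤ L*δ^2 := by rw [abs_sub_comm]; exact hadelta
    nlinarith [mul_le_mul_of_nonneg_right h2 hc2.le,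
      mul_nonneg (mul_nonneg hLpos.le hδpos.le) (sub_nonneg.mpr ha2)]
  have ha3 : 8*c^3*δ^3 ≤ a^3 := by
    have h := pow_le_pow_left₀ (by positivity) ha2 3
    calc 8*c^3*δ^3 = (2*c*δ)^3 := by ring
      _ ≤ a^3 := h
  have hainv3 : |(a^3)⁻¹ - (δ^3)⁻¹| ≤ 3*L/(8*c^3*δ^2) := by
    have h1 : (a^3)⁻¹ - (δ^3)⁻¹ = (δ^3 - a^3)/(a^3*δ^3) := by field_simp
    rw [h1, abs_div, abs_of_pos (by positivity : (0:ℝ) < a^3*δ^3),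
      div_le_div_iff₀ (by positivity) (by positivity : (0:ℝ) < 8*c^3*δ^2)]
    have hda : δ - a ≤ L*δ^2 := by
      have h := hadelta
      rw [abs_of_nonpos (by linarith : a - δ ≤ 0)] at h
      linarith
    have h3 : |δ^3 - a^3| = δ^3 - a^3 :=
      abs_of_nonneg (by nlinarith [pow_le_pow_left₀ hapos.le hale 3])
    rw [h3]
    have hcube : δ^3 - a^3 ≤ 3*(L*δ^2)*δ^2 := by
      nlinarith [mul_nonneg (mul_nonneg (sub_nonneg.mpr hale) (sub_nonneg.mpr hale))
        (by positivity : (0:ℝ) ≤ 2*δ + a),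
        mul_le_mul_of_nonneg_right hda (by positivity : (0:ℝ) ≤ 3*δ^2)]
    nlinarith [mul_le_mul_of_nonneg_right hcube (by positivity : (0:ℝ) ≤ 8*c^3*δ^2),
      mul_le_mul_of_nonneg_left ha3 (by positivity : (0:ℝ) ≤ 3*L*δ^3)]
  have hScoef : |δ⁻¹ - π/S| ≤ π^3/4 := by
    have h1 : δ⁻¹ - π/S = (S - π*δ)/(δ*S) := by field_simp
    rw [h1, abs_div, abs_of_pos (by positivity : (0:ℝ) < δ*S)]
    have h2 : |S - π*δ| = π*δ - S := by
      rw [abs_of_nonpos (by linarith)]; ring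
    rw [h2, div_le_div_iff₀ (by positivity) (by norm_num : (0:ℝ) < 4)]
    nlinarith [mul_le_mul_of_nonneg_right hScube (by norm_num : (0:ℝ) ≤ 4),
      mul_nonneg (mul_nonneg (pow_nonneg hπ.le 3) (sq_nonneg δ)) (sub_nonneg.mpr hS2),
      mul_nonneg (mul_nonneg (mul_nonneg (by norm_num : (0:ℝ) ≤ 4) (pow_nonneg hπ.le 3))
        (sq_nonneg δ)) (sub_nonneg.mpr hδhalf)]
  have hie : |⟪e, fs⟫| ≤ F := by
    have h := abs_real_inner_le_norm e fs
    rw [hne1, one_mul] at h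
    exact h.trans hfsF
  have hiw : |⟪w, fs⟫| ≤ L*δ^2*F := by
    have h := abs_real_inner_le_norm w fs
    refine h.trans ?_
    have h2 := mul_le_mul hwbd hfsF (norm_nonneg _) (by positivity)
    calc ‖w‖ * ‖fs‖ ≤ L*δ^2 * F := h2
      _ = L*δ^2*F := by ring
  have hsplit : a⁻¹ • ft + (⟪r, ft⟫ / a ^ 3) • r - (π / S) • (fs + ⟪e, fs⟫ • e)
      = a⁻¹ • (ft - fs) + (a⁻¹ - δ⁻¹) • fs
        + ((⟪r, ft⟫ - ⟪r, fs⟫) / a ^ 3) • r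
        + (a ^ 3)⁻¹ • (⟪r, fs⟫ • r - δ ^ 2 • (⟪e, fs⟫ • e))
        + (δ ^ 2 * ((a ^ 3)⁻¹ - (δ ^ 3)⁻¹)) • (⟪e, fs⟫ • e)
        + (δ⁻¹ - π / S) • (fs + ⟪e, fs⟫ • e) := by
    match_scalars <;> field_simp <;> ring
  have hb1 : ‖a⁻¹ • (ft - fs)‖ ≤ K/(2*c) := by
    rw [norm_smul, Real.norm_eq_abs, abs_of_pos (inv_pos.mpr hapos)]
    have h2 : a⁻¹ ≤ (2*c*δ)⁻¹ := inv_anti₀ (by positivity) ha2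
    calc a⁻¹ * ‖ft - fs‖ ≤ (2*c*δ)⁻¹ * (K*δ) :=
          mul_le_mul h2 hftfs (norm_nonneg _) (by positivity)
      _ = K/(2*c) := by field_simp
  have hb2 : ‖(a⁻¹ - δ⁻¹) • fs‖ ≤ L*F/(2*c) := by
    rw [norm_smul, Real.norm_eq_abs]
    calc |a⁻¹ - δ⁻¹| * ‖fs‖ ≤ (L/(2*c)) * F :=
          mul_le_mul hainv hfsF (norm_nonneg _) (by positivity)
      _ = L*F/(2*c) := by ring
  have hb3 : ‖((⟪r, ft⟫ - ⟪r, fs⟫) / a ^ 3) • r‖ ≤ K/(2*c) := by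
    rw [norm_smul, ← har, Real.norm_eq_abs, abs_div, abs_of_pos (pow_pos hapos 3)]
    have h1 : |⟪r, ft⟫ - ⟪r, fs⟫| ≤ a * (K*δ) := by
      rw [← inner_sub_right]
      refine (abs_real_inner_le_norm r (ft - fs)).trans ?_
      rw [← har]
      exact mul_le_mul_of_nonneg_left hftfs (by positivity)
    have h2 : |⟪r, ft⟫ - ⟪r, fs⟫| / a ^ 3 * a ≤ (a * (K*δ)) / a^3 * a := by gcongr
    refine h2.trans ?_
    have h3 : (a * (K*δ)) / a^3 * a = K*δ/a := by field_simp
    rw [h3, div_le_div_iff₀ hapos hc2]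
    nlinarith [mul_le_mul_of_nonneg_left ha2 hK0]
  have hkey4 : ⟪r, fs⟫ • r - δ^2 • (⟪e, fs⟫ • e)
      = (u * ⟪e, fs⟫) • w + (u * ⟪w, fs⟫) • e + ⟪w, fs⟫ • w := by
    have hru : r = u • e + w := by rw [hw]; abel
    rw [hru, inner_add_left, real_inner_smul_left]
    have hu2 : δ^2 = u^2 := by rw [hδu, sq_abs]
    rw [hu2]
    match_scalars <;> ring
  have hEnorm : ‖(u * ⟪e, fs⟫) • w + (u * ⟪w, fs⟫) • e + ⟪w, fs⟫ • w‖ ≤ 3*F*L^2*δ^3 := by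
    have hN : ‖(u * ⟪e, fs⟫) • w + (u * ⟪w, fs⟫) • e + ⟪w, fs⟫ • w‖
        ≤ ‖(u * ⟪e, fs⟫) • w‖ + ‖(u * ⟪w, fs⟫) • e‖ + ‖⟪w, fs⟫ • w‖ := norm_add₃_le
    refine hN.trans ?_
    rw [norm_smul, norm_smul, norm_smul, Real.norm_eq_abs, Real.norm_eq_abs, Real.norm_eq_abs,
      abs_mul, abs_mul, hne1, mul_one, ← hδu]
    have hq1 : δ * |⟪e, fs⟫| * ‖w‖ ≤ δ * F * (L*δ^2) := by gcongr <;> linarith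
    have hq2 : δ * |⟪w, fs⟫| ≤ δ * (L*δ^2*F) := by gcongr <;> linarith
    have hq3 : |⟪w, fs⟫| * ‖w‖ ≤ (L*δ^2*F) * (L*δ^2) := by
      exact mul_le_mul hiw hwbd (norm_nonneg _)
        (mul_nonneg (mul_nonneg hLpos.le (sq_nonneg δ)) hFpos.le)
    have hLL : (0:ℝ) ≤ F*(L^2 - L)*δ^3 :=
      mul_nonneg (mul_nonneg hFpos.le
        (by nlinarith [mul_nonneg hLpos.le (sub_nonneg.mpr hL1)]))
        (pow_nonneg hδpos.le 3)
    have hdd : (0:ℝ) ≤ F*L^2*δ^3*(1 - δ) :=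
      mul_nonneg (mul_nonneg (mul_nonneg hFpos.le (sq_nonneg L)) (pow_nonneg hδpos.le 3))
        (by linarith)
    nlinarith [hq1, hq2, hq3]
  have hb4 : ‖(a ^ 3)⁻¹ • (⟪r, fs⟫ • r - δ ^ 2 • (⟪e, fs⟫ • e))‖ ≤ 3*F*L^2/(8*c^3) := by
    rw [hkey4, norm_smul, Real.norm_eq_abs, abs_of_pos (inv_pos.mpr (pow_pos hapos 3))]
    have h2 : (a^3)⁻¹ ≤ (8*c^3*δ^3)⁻¹ := inv_anti₀ (by positivity) ha3
    calc (a^3)⁻¹ * ‖(u * ⟪e, fs⟫) • w + (u * ⟪w, fs⟫) • e + ⟪w, fs⟫ • w‖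
        ≤ (8*c^3*δ^3)⁻¹ * (3*F*L^2*δ^3) :=
          mul_le_mul h2 hEnorm (norm_nonneg _) (by positivity)
      _ = 3*F*L^2/(8*c^3) := by field_simp
  have hb5 : ‖(δ ^ 2 * ((a ^ 3)⁻¹ - (δ ^ 3)⁻¹)) • (⟪e, fs⟫ • e)‖ ≤ 3*L*F/(8*c^3) := by
    rw [norm_smul, norm_smul, Real.norm_eq_abs, Real.norm_eq_abs, abs_mul, hne1, mul_one,
      abs_of_nonneg (sq_nonneg δ)]
    calc δ^2 * |(a^3)⁻¹ - (δ^3)⁻¹| * |⟪e, fs⟫| ≤ δ^2 * (3*L/(8*c^3*δ^2)) * F := by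
          gcongr
      _ = 3*L*F/(8*c^3) := by field_simp
  have hb6 : ‖(δ⁻¹ - π / S) • (fs + ⟪e, fs⟫ • e)‖ ≤ π^3*F := by
    rw [norm_smul, Real.norm_eq_abs]
    have h1 : ‖fs + ⟪e, fs⟫ • e‖ ≤ 2*F := by
      calc ‖fs + ⟪e, fs⟫ • e‖ ≤ ‖fs‖ + ‖⟪e, fs⟫ • e‖ := norm_add_le _ _
        _ ≤ F + F := by
            refine add_le_add hfsF ?_
            rw [norm_smul, Real.norm_eq_abs, hne1, mul_one]
            exact hie
        _ = 2*F := by ring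
    calc |δ⁻¹ - π/S| * ‖fs + ⟪e, fs⟫ • e‖ ≤ (π^3/4) * (2*F) :=
          mul_le_mul hScoef h1 (norm_nonneg _) (by positivity)
      _ ≤ π^3*F := by nlinarith [pow_pos hπ 3, hFpos]
  rw [hsplit]
  refine le_trans (norm_add_le _ _) ?_
  refine le_trans (add_le_add (norm_add_le _ _) le_rfl) ?_
  refine le_trans (add_le_add (add_le_add (norm_add_le _ _) le_rfl) le_rfl) ?_
  refine le_trans (add_le_add (add_le_add (add_le_add (norm_add_le _ _) le_rfl) le_rfl) le_rfl) ?_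
  refine le_trans (add_le_add (add_le_add (add_le_add (add_le_add (norm_add_le _ _) le_rfl)
    le_rfl) le_rfl) le_rfl) ?_
  linarith [hb1, hb2, hb3, hb4, hb5, hb6]

set_option maxHeartbeats 1000000 in
lemma kr_taylor {V : Type*} [NormedAddCommGroup V] [NormedSpace ℝ V] (γ : ℝ → V) (L : ℝ)
    (hγdiff : Differentiable ℝ γ) (hL : 0 ≤ L)
    (hγ'lip : ∀ x y : ℝ, ‖deriv γ y - deriv γ x‖ ≤ L * |y - x|) :
    ∀ s t : ℝ, ‖γ s - γ t - (s - t) • deriv γ s‖ ≤ L * (s - t)^2 := by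
  intro s t
  have hg : ∀ u : ℝ, HasDerivAt (fun v => γ v - v • deriv γ s) (deriv γ u - deriv γ s) u := by
    intro u
    have h1 : HasDerivAt γ (deriv γ u) u := (hγdiff u).hasDerivAt
    have h2 : HasDerivAt (fun v : ℝ => v • deriv γ s) ((1:ℝ) • deriv γ s) u :=
      (hasDerivAt_id u).smul_const (deriv γ s)
    have h3 := h1.sub h2
    rw [one_smul] at h3
    exact h3
  have hseg : ∀ u ∈ Set.uIcc s t, ‖deriv γ u - deriv γ s‖ ≤ L * |s - t| := by
    intro u hu
    have h3 : |u - s| ≤ |s - t| := by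
      rcases Set.mem_uIcc.mp hu with ⟨ha1, ha2⟩ | ⟨ha1, ha2⟩ <;>
        rw [abs_le] <;> constructor <;>
        cases abs_cases (s - t) with
        | inl h => cases h with | intro h1 h2 => linarith
        | inr h => cases h with | intro h1 h2 => linarith
    calc ‖deriv γ u - deriv γ s‖ ≤ L * |u - s| := hγ'lip s u
      _ ≤ L * |s - t| := mul_le_mul_of_nonneg_left h3 hL
  have h := (convex_uIcc s t).norm_image_sub_le_of_norm_hasDerivWithin_le
    (f := fun v => γ v - v • deriv γ s) (f' := fun u => deriv γ u - deriv γ s)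
    (fun u _ => (hg u).hasDerivWithinAt) hseg Set.left_mem_uIcc Set.right_mem_uIcc
  have heq : (γ t - t • deriv γ s) - (γ s - s • deriv γ s)
      = -(γ s - γ t - (s - t) • deriv γ s) := by
    rw [sub_smul]; abel
  rw [heq, norm_neg] at h
  have habs : |s - t| * |s - t| = (s - t)^2 := by
    rw [abs_mul_abs_self]; ring
  calc ‖γ s - γ t - (s - t) • deriv γ s‖ ≤ L * |s - t| * ‖t - s‖ := h
    _ = L * (s - t)^2 := by
        rw [Real.norm_eq_abs, abs_sub_comm t s, mul_assoc, habs]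

set_option maxHeartbeats 1000000 in
lemma kr_sin_facts (u : ℝ) (hne : u ≠ 0) (hhalf : |u| ≤ 1/2) :
    2*|u| ≤ |Real.sin (π*u)| ∧ |Real.sin (π*u)| ≤ π*|u| ∧
      π*|u| - |Real.sin (π*u)| ≤ π^3*|u|^3 := by
  have hπ := Real.pi_pos
  have hSeq : |Real.sin (π*u)| = Real.sin (π*|u|) := by
    rcases abs_cases u with ⟨h1, h2⟩ | ⟨h1, h2⟩
    · have hu1 : u ≤ 1/2 := by rw [← h1]; exact hhalf
      have h0 : 0 ≤ Real.sin (π * u) :=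
        Real.sin_nonneg_of_nonneg_of_le_pi (by positivity) (by nlinarith)
      rw [h1, abs_of_nonneg h0]
    · have hu1 : -u ≤ 1/2 := by rw [← h1]; exact hhalf
      have h0 : Real.sin (π * u) ≤ 0 := by
        have h0' : 0 ≤ Real.sin (π * (-u)) :=
          Real.sin_nonneg_of_nonneg_of_le_pi (by nlinarith) (by nlinarith)
        rw [mul_neg, Real.sin_neg] at h0'
        linarith
      rw [h1, abs_of_nonpos h0, mul_neg, Real.sin_neg]
  have hδpos : 0 < |u| := abs_pos.mpr hne
  refine ⟨?_, ?_, ?_⟩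
  · rw [hSeq]
    have h := Real.mul_le_sin (x := π * |u|) (by positivity) (by nlinarith)
    calc 2*|u| = 2/π * (π * |u|) := by field_simp
      _ ≤ Real.sin (π*|u|) := h
  · rw [hSeq]; exact Real.sin_le (by positivity)
  · rw [hSeq]
    have h := kr_sub_sin_le_cube (x := π*|u|) (by positivity) (by nlinarith)
    calc π*|u| - Real.sin (π*|u|) ≤ (π*|u|)^3 := h
      _ = π^3*|u|^3 := by ring

set_option maxHeartbeats 1000000 in
/-- The two individually divergent terms in the Keller–Rubinow slender-body
integrand cancel to give a bounded integrand. -/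
theorem keller_rubinow_integrand_bounded
    (γ f : ℝ → EuclideanSpace ℝ (Fin 3)) (K : NNReal) (c : ℝ)
    (hγper : Function.Periodic γ 1)
    (hγC2 : ContDiff ℝ 2 γ)
    (hunit : ∀ s : ℝ, ‖deriv γ s‖ = 1)
    (hc : 0 < c)
    (hchord : ∀ s t : ℝ, c * |Real.sin (π * (s - t))| ≤ ‖γ s - γ t‖)
    (hfper : Function.Periodic f 1)
    (hflip : LipschitzWith K f) :
    ∃ M : ℝ, 0 < M ∧ ∀ s t : ℝ, (∀ n : ℤ, s - t ≠ (n : ℝ)) →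
      ‖(‖γ s - γ t‖)⁻¹ • f t
          + (⟪γ s - γ t, f t⟫ / ‖γ s - γ t‖ ^ 3) • (γ s - γ t)
          - (π / |Real.sin (π * (s - t))|) •
              (f s + ⟪deriv γ s, f s⟫ • deriv γ s)‖ ≤ M := by
  have hπ := Real.pi_pos
  have hγdiff : Differentiable ℝ γ := hγC2.differentiable (by norm_num)
  have h11 : ContDiff ℝ (1 + 1) γ := by norm_num; exact hγC2
  have hγ'C1 : ContDiff ℝ 1 (deriv γ) := (contDiff_succ_iff_deriv.mp h11).2.2
  have hγ'diff : Differentiable ℝ (deriv γ) := hγ'C1.differentiable one_ne_zero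
  have hγ''cont : Continuous (deriv (deriv γ)) := hγ'C1.continuous_deriv le_rfl
  have hγ'per : Function.Periodic (deriv γ) 1 := kr_periodic_deriv γ hγper
  have hγ''per : Function.Periodic (deriv (deriv γ)) 1 := kr_periodic_deriv _ hγ'per
  obtain ⟨L0, hL0⟩ := kr_periodic_norm_bound _ hγ''per hγ''cont
  set L := max L0 1 with hLdef
  have hL1 : (1:ℝ) ≤ L := le_max_right _ _
  have hLpos : (0:ℝ) < L := lt_of_lt_of_le one_pos hL1
  have hLbd : ∀ x, ‖deriv (deriv γ) x‖ ≤ L := fun x => (hL0 x).trans (le_max_left _ _)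
  have hγ'lip : ∀ x y : ℝ, ‖deriv γ y - deriv γ x‖ ≤ L * |y - x| := by
    intro x y
    have h := convex_univ.norm_image_sub_le_of_norm_deriv_le
      (f := deriv γ) (fun z _ => hγ'diff z) (fun z _ => hLbd z) (Set.mem_univ x) (Set.mem_univ y)
    simpa [Real.norm_eq_abs] using h
  have hγlip : ∀ x y : ℝ, ‖γ y - γ x‖ ≤ |y - x| := by
    intro x y
    have h := convex_univ.norm_image_sub_le_of_norm_deriv_le
      (f := γ) (fun z _ => hγdiff z) (fun z _ => (hunit z).le) (Set.mem_univ x) (Set.mem_univ y)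
    simpa [Real.norm_eq_abs] using h
  obtain ⟨F0, hF0⟩ := kr_periodic_norm_bound f hfper hflip.continuous
  set F := max F0 1 with hFdef
  have hF1 : (1:ℝ) ≤ F := le_max_right _ _
  have hFpos : (0:ℝ) < F := lt_of_lt_of_le one_pos hF1
  have hFbd : ∀ x, ‖f x‖ ≤ F := fun x => (hF0 x).trans (le_max_left _ _)
  have hfl : ∀ x y : ℝ, ‖f y - f x‖ ≤ K * |y - x| := by
    intro x y
    have h := hflip.dist_le_mul y x
    simpa [dist_eq_norm, Real.dist_eq] using h
  have hK0 : (0:ℝ) ≤ K := K.coe_nonneg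
  have htaylor := kr_taylor γ L hγdiff hLpos.le hγ'lip
  set M := (K:ℝ)/(2*c) + L*F/(2*c) + (K:ℝ)/(2*c) + 3*F*L^2/(8*c^3) + 3*L*F/(8*c^3) + π^3*F + 1
    with hMdef
  have hc2 : (0:ℝ) < 2*c := by linarith
  have hc3 : (0:ℝ) < 8*c^3 := by positivity
  have hMpos : 0 < M := by
    have h1 : (0:ℝ) ≤ (K:ℝ)/(2*c) := div_nonneg hK0 hc2.le
    have h2 : (0:ℝ) ≤ L*F/(2*c) := div_nonneg (by positivity) hc2.le
    have h3 : (0:ℝ) ≤ 3*F*L^2/(8*c^3) := div_nonneg (by positivity) hc3.le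
    have h4 : (0:ℝ) ≤ 3*L*F/(8*c^3) := div_nonneg (by positivity) hc3.le
    have h5 : (0:ℝ) ≤ π^3*F := by positivity
    rw [hMdef]; linarith
  refine ⟨M, hMpos, ?_⟩
  have key : ∀ s t : ℝ, s - t ≠ 0 → |s - t| ≤ 1/2 →
      ‖(‖γ s - γ t‖)⁻¹ • f t
          + (⟪γ s - γ t, f t⟫ / ‖γ s - γ t‖ ^ 3) • (γ s - γ t)
          - (π / |Real.sin (π * (s - t))|) •
              (f s + ⟪deriv γ s, f s⟫ • deriv γ s)‖ ≤ M := by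
    intro s t hne hhalf
    obtain ⟨hS2, hSle, hScube⟩ := kr_sin_facts (s - t) hne hhalf
    have hδpos : 0 < |s - t| := abs_pos.mpr hne
    have ha2 : 2*c*|s - t| ≤ ‖γ s - γ t‖ := by
      have h := hchord s t
      nlinarith
    have hale : ‖γ s - γ t‖ ≤ |s - t| := hγlip t s
    have hwbd : ‖γ s - γ t - (s - t) • deriv γ s‖ ≤ L*|s - t|^2 := by
      have h := htaylor s t
      rw [sq_abs]
      exact h
    have hftfs : ‖f t - f s‖ ≤ (K:ℝ) * |s - t| := by
      have h := hfl s t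
      rw [abs_sub_comm t s] at h
      exact h
    have h := kr_core (K:ℝ) c L F (|s - t|) (‖γ s - γ t‖) (|Real.sin (π * (s - t))|) (s - t)
      (γ s - γ t) (deriv γ s) (f t) (f s)
      hc hL1 hF1 hK0 hδpos hhalf rfl (hunit s) (hFbd s) hftfs hS2 hSle hScube
      ha2 hale rfl hwbd
    refine h.trans ?_
    rw [hMdef]
    linarith
  intro s t hst
  set n := round (s - t) with hn
  have hne : s - (t + n) ≠ 0 := by
    intro h
    exact hst n (by linarith)
  have hhalf : |s - (t + n)| ≤ 1/2 := by
    have h := abs_sub_round (s - t)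
    have he2 : s - (t + (n:ℝ)) = s - t - round (s - t) := by rw [hn]; ring
    rw [he2]
    exact h
  have hγt : γ (t + n) = γ t := by
    have h := hγper.sub_int_mul_eq (x := t + n) n
    simpa using h.symm
  have hft' : f (t + n) = f t := by
    have h := hfper.sub_int_mul_eq (x := t + n) n
    simpa using h.symm
  have hsin : |Real.sin (π * (s - (t + n)))| = |Real.sin (π * (s - t))| := by
    have harg : π * (s - (t + (n:ℝ))) = π * (s - t) - n * π := by push_cast; ring
    rw [harg, Real.sin_antiperiodic.sub_int_mul_eq n]
    rcases Int.units_eq_one_or n.negOnePow with h | h <;> rw [h] <;> simp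
  have hmain := key s (t + n) hne hhalf
  rw [hγt, hft', hsin] at hmain
  exact hmain
end

section
/- Define the planar curve γ : ℝ → ℝ² by γ(s) = (3/4 + (1/4)·cos(4s))^(−1/4) · (cos s, sin s), which parameterizes the boundary of the unit ball of the 4-norm in the plane (the curve x⁴ + y⁴ = 1), using the identity cos⁴ s + sin⁴ s = 3/4 + (1/4)cos(4s). Then γ'(0) = (0,1) ≠ 0 while γ''(0) = (0,0). Hence the derivative of the unit tangent vector vanishes at s = 0 and the Frenet normal T'/‖T'‖ is undefined there. -/
open Real

noncomputable def fnB (s : ℝ) : ℝ := 3 / 4 + (1 / 4) * Real.cos (4 * s)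

noncomputable def fnF (s : ℝ) : ℝ := fnB s ^ (-(1 / 4 : ℝ))

noncomputable def fnF1 (s : ℝ) : ℝ :=
  (1 / 4) * Real.sin (4 * s) * fnB s ^ (-(5 / 4 : ℝ))

lemma fnB_pos (s : ℝ) : 0 < fnB s := by
  have h := Real.neg_one_le_cos (4 * s)
  unfold fnB; nlinarith

lemma hasDerivAt_fnB (s : ℝ) : HasDerivAt fnB (-Real.sin (4 * s)) s := by
  have h4 : HasDerivAt (fun x : ℝ => 4 * x) 4 s := by
    simpa using (hasDerivAt_id s).const_mul 4
  have hc : HasDerivAt (fun x : ℝ => Real.cos (4 * x))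
      (-Real.sin (4 * s) * 4) s := (Real.hasDerivAt_cos (4 * s)).comp s h4
  have := (hc.const_mul (1 / 4)).const_add (3 / 4)
  exact this.congr_deriv (by ring)

lemma hasDerivAt_fnF (s : ℝ) : HasDerivAt fnF (fnF1 s) s := by
  have h := (hasDerivAt_fnB s).rpow_const (p := -(1 / 4 : ℝ))
    (Or.inl (fnB_pos s).ne')
  have he : (-(1 / 4 : ℝ) - 1) = -(5 / 4 : ℝ) := by norm_num
  unfold fnF fnF1
  convert h using 1
  rw [he]; ring

lemma fnB_zero : fnB 0 = 1 := by simp [fnB]; norm_num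

lemma fnF_zero : fnF 0 = 1 := by
  rw [fnF, fnB_zero, Real.one_rpow]

lemma fnF1_zero : fnF1 0 = 0 := by simp [fnF1]

lemma hasDerivAt_fnF1_zero : HasDerivAt fnF1 1 0 := by
  have h1 : HasDerivAt (fun s : ℝ => (1 / 4) * Real.sin (4 * s))
      (Real.cos 0) 0 := by
    have h4 : HasDerivAt (fun x : ℝ => 4 * x) 4 0 := by
      simpa using (hasDerivAt_id (0:ℝ)).const_mul 4
    have hs : HasDerivAt (fun x : ℝ => Real.sin (4 * x))
        (Real.cos (4 * 0) * 4) 0 := (Real.hasDerivAt_sin (4 * 0)).comp 0 h4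
    have := hs.const_mul (1 / 4)
    exact this.congr_deriv (by norm_num)
  have h2 : HasDerivAt (fun s : ℝ => fnB s ^ (-(5 / 4 : ℝ)))
      (-Real.sin (4 * 0) * (-(5 / 4 : ℝ)) * fnB 0 ^ (-(5 / 4 : ℝ) - 1)) 0 :=
    (hasDerivAt_fnB 0).rpow_const (Or.inl (fnB_pos 0).ne')
  have hmul := h1.mul h2
  have : HasDerivAt fnF1
      (Real.cos 0 * fnB 0 ^ (-(5 / 4 : ℝ)) +
        (1 / 4) * Real.sin (4 * 0) *
          (-Real.sin (4 * 0) * (-(5 / 4 : ℝ)) * fnB 0 ^ (-(5 / 4 : ℝ) - 1))) 0 :=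
    hmul
  convert this using 1
  rw [fnB_zero]
  simp

/-- For the parameterization `γ(s) = (3/4 + (1/4)cos 4s)^(-1/4) (cos s, sin s)` of the
boundary of the unit ball of the 4-norm in the plane (the curve `x⁴ + y⁴ = 1`),
the velocity `γ'(0) = (0,1)` is nonzero while the acceleration `γ''(0) = (0,0)`
vanishes; hence the Frenet normal `T'/‖T'‖` is undefined at `s = 0`. -/
theorem frenet_normal_fails_for_four_norm_ball
    (γ : ℝ → ℝ × ℝ)
    (hγ : ∀ s : ℝ, γ s =
      ((3 / 4 + (1 / 4) * Real.cos (4 * s)) ^ (-(1 / 4 : ℝ))) •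
        (Real.cos s, Real.sin s)) :
    (∀ s : ℝ, (γ s).1 ^ 4 + (γ s).2 ^ 4 = 1) ∧
      deriv γ 0 = (0, 1) ∧ ((0, 1) : ℝ × ℝ) ≠ 0 ∧
      deriv (deriv γ) 0 = (0, 0) := by
  -- rewrite γ in component form
  have hγ' : γ = fun s => (fnF s * Real.cos s, fnF s * Real.sin s) := by
    funext s
    rw [hγ s]
    simp [fnF, fnB, Prod.smul_mk, smul_eq_mul]
  -- the derivative function
  set D : ℝ → ℝ × ℝ := fun s =>
    (fnF1 s * Real.cos s - fnF s * Real.sin s,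
     fnF1 s * Real.sin s + fnF s * Real.cos s) with hD
  have hder : ∀ s : ℝ, HasDerivAt γ (D s) s := by
    intro s
    rw [hγ']
    have h1 : HasDerivAt (fun s => fnF s * Real.cos s)
        (fnF1 s * Real.cos s + fnF s * (-Real.sin s)) s :=
      (hasDerivAt_fnF s).mul (Real.hasDerivAt_cos s)
    have h2 : HasDerivAt (fun s => fnF s * Real.sin s)
        (fnF1 s * Real.sin s + fnF s * Real.cos s) s :=
      (hasDerivAt_fnF s).mul (Real.hasDerivAt_sin s)
    have h1' : HasDerivAt (fun s => fnF s * Real.cos s)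
        (fnF1 s * Real.cos s - fnF s * Real.sin s) s := by
      convert h1 using 1; ring
    exact HasDerivAt.prodMk h1' h2
  have hderiv : deriv γ = D := funext fun s => (hder s).deriv
  refine ⟨?_, ?_, ?_, ?_⟩
  · -- on the 4-norm unit circle
    intro s
    rw [hγ']
    have hb := fnB_pos s
    have hf4 : fnF s ^ 4 = (fnB s)⁻¹ := by
      rw [fnF, ← Real.rpow_natCast (fnB s ^ (-(1/4:ℝ))) 4,
        ← Real.rpow_mul hb.le]
      norm_num
      exact Real.rpow_neg_one _
    have htrig : Real.cos s ^ 4 + Real.sin s ^ 4 = fnB s := by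
      have h1 : Real.cos (4 * s) = 2 * Real.cos (2 * s) ^ 2 - 1 := by
        have := Real.cos_two_mul (2 * s)
        rw [show (2 : ℝ) * (2 * s) = 4 * s by ring] at this
        exact this
      have h2 : Real.cos (2 * s) = 2 * Real.cos s ^ 2 - 1 := Real.cos_two_mul s
      have h3 : Real.sin s ^ 2 = 1 - Real.cos s ^ 2 := Real.sin_sq s
      unfold fnB
      rw [h1, h2]
      nlinarith [h3]
    have : (fnF s * Real.cos s) ^ 4 + (fnF s * Real.sin s) ^ 4
        = fnF s ^ 4 * (Real.cos s ^ 4 + Real.sin s ^ 4) := by ring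
    simp only [this, hf4, htrig]
    exact inv_mul_cancel₀ hb.ne'
  · rw [hderiv, hD]
    simp [fnF_zero, fnF1_zero]
  · intro h
    have := congrArg Prod.snd h
    simp at this
  · rw [hderiv]
    -- second derivative at 0
    have h1 : HasDerivAt (fun s => fnF1 s * Real.cos s - fnF s * Real.sin s)
        ((1 * Real.cos 0 + fnF1 0 * (-Real.sin 0)) -
         (fnF1 0 * Real.sin 0 + fnF 0 * Real.cos 0)) 0 :=
      (hasDerivAt_fnF1_zero.mul (Real.hasDerivAt_cos 0)).sub
        ((hasDerivAt_fnF 0).mul (Real.hasDerivAt_sin 0))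
    have h2 : HasDerivAt (fun s => fnF1 s * Real.sin s + fnF s * Real.cos s)
        ((1 * Real.sin 0 + fnF1 0 * Real.cos 0) +
         (fnF1 0 * Real.cos 0 + fnF 0 * (-Real.sin 0))) 0 :=
      (hasDerivAt_fnF1_zero.mul (Real.hasDerivAt_sin 0)).add
        ((hasDerivAt_fnF 0).mul (Real.hasDerivAt_cos 0))
    have h1' : HasDerivAt (fun s => fnF1 s * Real.cos s - fnF s * Real.sin s)
        (0 : ℝ) 0 := by
      convert h1 using 1
      simp [fnF_zero, fnF1_zero]
    have h2' : HasDerivAt (fun s => fnF1 s * Real.sin s + fnF s * Real.cos s)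
        (0 : ℝ) 0 := by
      convert h2 using 1
      simp [fnF_zero, fnF1_zero]
    exact (HasDerivAt.prodMk h1' h2').deriv
end

section
/- Let s_l < s_r be real numbers and let h_l, h_r > 0 with h_l ≠ h_r. Define C = log(h_r/h_l), A = (s_r·h_l − s_l·h_r)/(h_l − h_r), B = (s_l − s_r)·h_l/(h_l − h_r), and let L : ℝ → ℝ be the affine function with L(s_l) = h_l and L(s_r) = h_r, i.e. L(s) = h_l + (s − s_l)·(h_r − h_l)/(s_r − s_l). Then the function s(t) = A + B·e^{C·t} satisfies s(0) = s_l, s(1) = s_r, and the first-order differential equation s'(t) = λ·L(s(t)) for all t, where λ = C·(s_r − s_l)/(h_r − h_l) is a constant. That is, s(t) solves the boundary value problem in which ds/dt is proportional to the linear interpolant of h along the interval, with the proportionality constant determined as part of the solution. -/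
open Real

/-- The exponential map `s(t) = A + B e^{Ct}` solves the boundary value problem in
which `ds/dt` is proportional to the linear interpolant `L` of the endpoint
distances `h_l`, `h_r`, with proportionality constant `λ = C (s_r - s_l)/(h_r - h_l)`. -/
theorem exponential_substitution_solves_bvp
    (s_l s_r h_l h_r A B C lam : ℝ) (L : ℝ → ℝ)
    (hs : s_l < s_r) (hl : 0 < h_l) (hr : 0 < h_r) (hne : h_l ≠ h_r)
    (hC : C = Real.log (h_r / h_l))
    (hA : A = (s_r * h_l - s_l * h_r) / (h_l - h_r))
    (hB : B = (s_l - s_r) * h_l / (h_l - h_r))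
    (hL : ∀ s : ℝ, L s = h_l + (s - s_l) * (h_r - h_l) / (s_r - s_l))
    (hlam : lam = C * (s_r - s_l) / (h_r - h_l)) :
    A + B * Real.exp (C * 0) = s_l ∧ A + B * Real.exp (C * 1) = s_r ∧
      ∀ t : ℝ, HasDerivAt (fun t' => A + B * Real.exp (C * t'))
        (lam * L (A + B * Real.exp (C * t))) t := by
  have hd : h_l - h_r ≠ 0 := sub_ne_zero.mpr hne
  have hd' : h_r - h_l ≠ 0 := sub_ne_zero.mpr (Ne.symm hne)
  have hss : s_r - s_l ≠ 0 := sub_ne_zero.mpr (ne_of_gt hs)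
  refine ⟨?_, ?_, ?_⟩
  · rw [mul_zero, Real.exp_zero, hA, hB]
    field_simp
    ring
  · rw [mul_one, hC, Real.exp_log (div_pos hr hl), hA, hB]
    field_simp
    ring
  · intro t
    have h := (((hasDerivAt_id t).const_mul C).exp.const_mul B).const_add A
    refine h.congr_deriv ?_
    rw [hL, hA, hB, hlam, id_eq]
    field_simp
    ring
end
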